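/- Let f : ℝ → ℝ be continuous and define for each x in an open set O ⊆ ℝ^d and a C¹ function u : O → ℝ vanishing outside a compact subset, F(y) = ∫₀^y f(y') dy'. Then div_x[F(u(x))] = f(u(x))·∇u(x) and consequently ∫_O f(u(x))·∇u(x) dx = 0. -/

import Mathlib

open MeasureTheory

/-- Lemma 5.6(1): for continuous `f : ℝ → ℝ^d`, `F(y) = ∫₀^y f`, and a `C¹` function
`u` compactly supported in an open set `O ⊆ ℝ^d`, the spatial divergence of
`x ↦ F(u(x))` equals `f(u(x))·∇u(x)`, and consequently `∫_O f(u(x))·∇u(x) dx = 0`. -/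
theorem divergence_antiderivative_vanishes
    (d : ℕ) (O : Set (Fin d → ℝ)) (hO : IsOpen O)
    (f : ℝ → Fin d → ℝ) (hf : Continuous f)
    (u : (Fin d → ℝ) → ℝ) (hu : ContDiff ℝ 1 u)
    (husupp : HasCompactSupport u) (husub : tsupport u ⊆ O)
    (F : ℝ → Fin d → ℝ) (hF : ∀ y : ℝ, F y = ∫ t in (0:ℝ)..y, f t) :
    (∀ x : Fin d → ℝ,
        ∑ i, fderiv ℝ (fun z => F (u z) i) x (Pi.single i 1)
          = ∑ i, f (u x) i * fderiv ℝ u x (Pi.single i 1)) ∧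
      (∫ x in O, ∑ i, f (u x) i * fderiv ℝ u x (Pi.single i 1)) = 0 := by
  have hud : Differentiable ℝ u := hu.differentiable one_ne_zero
  have hfc : ∀ i : Fin d, Continuous fun t => f t i := fun i =>
    (continuous_apply i).comp hf
  -- componentwise antiderivative
  have hFi : ∀ (i : Fin d) (y : ℝ),
      HasDerivAt (fun y : ℝ => F y i) (f y i) y := by
    intro i y
    have h1 : ∀ z : ℝ, F z i = ∫ t in (0:ℝ)..z, f t i := by
      intro z
      rw [hF z]
      have := (ContinuousLinearMap.proj (R := ℝ) (φ := fun _ : Fin d => ℝ) i).intervalIntegral_comp_comm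
        (hf.intervalIntegrable (μ := volume) 0 z)
      simpa using this.symm
    have h2 : HasDerivAt (fun z : ℝ => ∫ t in (0:ℝ)..z, f t i) (f y i) y :=
      intervalIntegral.integral_hasDerivAt_right ((hfc i).intervalIntegrable _ _)
        ((hfc i).stronglyMeasurableAtFilter _ _) (hfc i).continuousAt
    exact h2.congr_of_eventuallyEq (Filter.Eventually.of_forall h1)
  -- chain rule
  have hG : ∀ (i : Fin d) (x : Fin d → ℝ),
      HasFDerivAt (fun z => F (u z) i) (f (u x) i • fderiv ℝ u x) x := by
    intro i x
    exact (hFi i (u x)).comp_hasFDerivAt x (hud x).hasFDerivAt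
  have key : ∀ (i : Fin d) (x : Fin d → ℝ),
      fderiv ℝ (fun z => F (u z) i) x = f (u x) i • fderiv ℝ u x :=
    fun i x => (hG i x).fderiv
  constructor
  · intro x
    refine Finset.sum_congr rfl fun i _ => ?_
    rw [key i x]
    simp [smul_eq_mul]
  · -- integrability facts
    have hfderiv_cont : Continuous (fderiv ℝ u) := hu.continuous_fderiv one_ne_zero
    have hterm_cont : ∀ i : Fin d,
        Continuous fun x => f (u x) i * fderiv ℝ u x (Pi.single i 1) := fun i =>
      ((hfc i).comp hu.continuous).mul (hfderiv_cont.clm_apply continuous_const)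
    have hterm_supp : ∀ i : Fin d,
        HasCompactSupport fun x => f (u x) i * fderiv ℝ u x (Pi.single i 1) := by
      intro i
      have : HasCompactSupport fun x => fderiv ℝ u x (Pi.single i 1) :=
        husupp.fderiv_apply ℝ (Pi.single i 1)
      exact this.mul_left
    have hterm_int : ∀ i : Fin d,
        Integrable (fun x => f (u x) i * fderiv ℝ u x (Pi.single i 1)) :=
      fun i => ((hterm_cont i).integrable_of_hasCompactSupport (hterm_supp i))
    -- extend integral from O to the whole space
    have hzero : ∀ x, x ∉ O →
        (∑ i, f (u x) i * fderiv ℝ u x (Pi.single i 1)) = 0 := by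
      intro x hx
      have hxt : x ∉ tsupport u := fun h => hx (husub h)
      have : fderiv ℝ u x = 0 := fderiv_of_notMem_tsupport ℝ hxt
      simp [this]
    rw [setIntegral_eq_integral_of_forall_compl_eq_zero hzero]
    rw [integral_finset_sum _ fun i _ => hterm_int i]
    refine Finset.sum_eq_zero fun i _ => ?_
    -- each directional-derivative integral vanishes by integration by parts with 1
    have hGsupp : HasCompactSupport fun z => F (u z) i := by
      have hF0 : (fun y : ℝ => F y i) 0 = 0 := by
        simp [hF 0]
      exact (husupp.comp_left (g := fun y : ℝ => F y i) hF0 :)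
    have hGcont : Continuous fun z => F (u z) i := by
      have : Differentiable ℝ fun y : ℝ => F y i := fun y => (hFi i y).differentiableAt
      exact this.continuous.comp hu.continuous
    have hGdiff : Differentiable ℝ fun z => F (u z) i := fun x => (hG i x).differentiableAt
    have ibp := integral_mul_fderiv_eq_neg_fderiv_mul_of_integrable
      (μ := (volume : Measure (Fin d → ℝ)))
      (f := fun _ : Fin d → ℝ => (1 : ℝ)) (g := fun z => F (u z) i)
      (v := Pi.single i 1) ?_ ?_ ?_ (fun x _ => differentiable_const (1:ℝ) x) (fun x _ => hGdiff x)
    · have heq : ∀ x, fderiv ℝ (fun z => F (u z) i) x (Pi.single i 1)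
          = f (u x) i * fderiv ℝ u x (Pi.single i 1) := by
        intro x; rw [key i x]; simp [smul_eq_mul]
      simp only [one_mul, fderiv_const, Pi.zero_apply, ContinuousLinearMap.zero_apply,
        zero_mul, integral_zero, neg_zero] at ibp
      rw [← funext heq] at *
      simpa using ibp
    · simpa using (integrable_zero _ _ (volume : Measure (Fin d → ℝ)))
    · have : Integrable (fun x => fderiv ℝ (fun z => F (u z) i) x (Pi.single i 1)) := by
        have : (fun x => fderiv ℝ (fun z => F (u z) i) x (Pi.single i 1))
            = fun x => f (u x) i * fderiv ℝ u x (Pi.single i 1) := by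
          funext x; rw [key i x]; simp [smul_eq_mul]
        rw [this]; exact hterm_int i
      simpa using this
    · simpa using (hGcont.integrable_of_hasCompactSupport hGsupp)
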